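/- Let q be a density on R^d of the form q(x) = det(Σ)^{-1/2} q₀(Σ^{-1/2}x) where Σ is positive definite and q₀ is rotationally invariant with finite second moments. Then for any unit direction determined by a nonzero vector u ∈ R^d, ∫_{{y : ⟨y,u⟩ ≥ 0}} y q(y) dy = m₁(q₀) · Σu / |Σ^{1/2} u|, where m₁(q₀) = ∫ y₁ 1{y₁ ≥ 0} q₀(y) dy > 0. -/

import Mathlib

open MeasureTheory Matrix

section helpers
variable {d : ℕ}



/-- Change of variables for an invertible matrix on a set integral. -/
lemma cov {E : Type*} [NormedAddCommGroup E] [NormedSpace ℝ E]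
    (M : Matrix (Fin d) (Fin d) ℝ) (hM : M.det ≠ 0)
    (s : Set (Fin d → ℝ)) (hs : MeasurableSet s)
    (f : (Fin d → ℝ) → E) (hf : AEStronglyMeasurable f volume) :
    ∫ y in s, f y = |M.det| • ∫ z in (M.mulVec ⁻¹' s), f (M.mulVec z) := by
  have hmap : Measure.map (Matrix.toLin' M) volume
      = ENNReal.ofReal |(M.det)⁻¹| • volume :=
    Real.map_matrix_volume_pi_eq_smul_volume_pi hM
  have hmeas : AEMeasurable (Matrix.toLin' M) volume :=
    (LinearMap.continuous_on_pi _).measurable.aemeasurable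
  have hfm : AEStronglyMeasurable f (Measure.map (Matrix.toLin' M) volume) := by
    rw [hmap]; exact hf.smul_measure _
  have h1 : ∫ y in s, f y ∂(Measure.map (Matrix.toLin' M) volume)
      = ∫ z in (Matrix.toLin' M) ⁻¹' s, f ((Matrix.toLin' M) z) :=
    setIntegral_map hs hfm hmeas
  rw [hmap] at h1
  rw [Measure.restrict_smul, integral_smul_measure] at h1
  have hpre : (Matrix.toLin' M) ⁻¹' s = M.mulVec ⁻¹' s := by
    ext z; simp [Matrix.toLin'_apply]
  have happ : ∀ z, (Matrix.toLin' M) z = M.mulVec z := fun z => Matrix.toLin'_apply M z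
  simp only [hpre, happ] at h1
  rw [← h1, ENNReal.toReal_ofReal (abs_nonneg _), smul_smul]
  rw [abs_inv, mul_inv_cancel₀ (by simpa using hM), one_smul]



lemma vecMulVec_mulVec' (w v : Fin d → ℝ) :
    (vecMulVec w w).mulVec v = (w ⬝ᵥ v) • w := by
  ext i
  simp only [mulVec, dotProduct, vecMulVec_apply, Pi.smul_apply, smul_eq_mul]
  rw [Finset.sum_congr rfl (fun k _ => by ring : ∀ k ∈ Finset.univ,
    w i * w k * v k = w i * (w k * v k))]
  rw [← Finset.mul_sum]
  ring

lemma householder (hd : 0 < d) (v : Fin d → ℝ) (hv : v ⬝ᵥ v = 1) :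
    ∃ U : Matrix (Fin d) (Fin d) ℝ, U * Uᵀ = 1 ∧ Uᵀ = U ∧
      U.mulVec v = Pi.single (⟨0, hd⟩ : Fin d) 1 := by
  set e : Fin d → ℝ := Pi.single (⟨0, hd⟩ : Fin d) 1 with he
  by_cases hve : v = e
  · exact ⟨1, by simp, by simp, by rw [one_mulVec, hve]⟩
  have hee : e ⬝ᵥ e = 1 := by simp [he, single_dotProduct]
  set w : Fin d → ℝ := v - e with hw
  have hwv : w ⬝ᵥ v = 1 - e ⬝ᵥ v := by
    rw [hw, sub_dotProduct, hv]
  have hc : w ⬝ᵥ w = 2 * (w ⬝ᵥ v) := by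
    rw [hwv, hw]
    simp only [sub_dotProduct, dotProduct_sub, hv, hee, dotProduct_comm e v]
    ring
  have hcne : w ⬝ᵥ w ≠ 0 := by
    intro h
    apply hve
    have h0 : w = 0 := by rwa [dotProduct_self_eq_zero] at h
    rw [hw, sub_eq_zero] at h0
    exact h0
  set M : Matrix (Fin d) (Fin d) ℝ := vecMulVec w w with hM
  have hMT : Mᵀ = M := by
    ext i j; simp [hM, vecMulVec_apply, mul_comm]
  have hMM : M * M = (w ⬝ᵥ w) • M := by
    ext i j
    simp only [hM, mul_apply, vecMulVec_apply, Matrix.smul_apply, smul_eq_mul]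
    rw [Finset.sum_congr rfl (fun k _ => by ring : ∀ k ∈ Finset.univ,
      w i * w k * (w k * w j) = w i * w j * (w k * w k))]
    rw [← Finset.mul_sum]
    simp only [dotProduct]
    ring
  have hac : (2 / (w ⬝ᵥ w)) * (w ⬝ᵥ w) = 2 := div_mul_cancel₀ 2 hcne
  refine ⟨1 - (2 / (w ⬝ᵥ w)) • M, ?_, ?_, ?_⟩
  · rw [transpose_sub, transpose_one, transpose_smul, hMT]
    simp only [sub_mul, mul_sub, one_mul, mul_one, smul_mul_assoc,
      mul_smul_comm, hMM, smul_smul]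
    rw [hac, smul_sub, smul_smul,
      show (2 / (w ⬝ᵥ w)) * 2 = 2 / (w ⬝ᵥ w) + 2 / (w ⬝ᵥ w) by ring, add_smul]
    abel
  · rw [transpose_sub, transpose_one, transpose_smul, hMT]
  · rw [sub_mulVec, one_mulVec, smul_mulVec, hM, vecMulVec_mulVec',
      smul_smul]
    have h1 : (2 / (w ⬝ᵥ w)) * (w ⬝ᵥ v) = 1 := by
      rw [hc]
      have hne : w ⬝ᵥ v ≠ 0 := fun h => hcne (by rw [hc, h, mul_zero])
      field_simp
    rw [h1, one_smul, hw, sub_sub_cancel]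



private lemma measurable_dot (v : Fin d → ℝ) : Measurable (fun y : Fin d → ℝ => y ⬝ᵥ v) := by
  simp only [dotProduct]
  exact Finset.measurable_sum _ (fun i _ => (measurable_pi_apply i).mul_const _)

private lemma measurableSet_halfspace (v : Fin d → ℝ) :
    MeasurableSet {y : Fin d → ℝ | 0 ≤ y ⬝ᵥ v} :=
  measurableSet_le measurable_const (measurable_dot v)

private lemma measurable_mulVec (M : Matrix (Fin d) (Fin d) ℝ) :
    Measurable (fun y : Fin d → ℝ => M.mulVec y) :=
  (LinearMap.continuous_on_pi M.mulVecLin).measurable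

private noncomputable def mvCLM (M : Matrix (Fin d) (Fin d) ℝ) :
    (Fin d → ℝ) →L[ℝ] (Fin d → ℝ) :=
  LinearMap.toContinuousLinearMap M.mulVecLin

private lemma mvCLM_apply (M : Matrix (Fin d) (Fin d) ℝ) (x : Fin d → ℝ) :
    mvCLM M x = M.mulVec x := rfl

private lemma hyperplane_null (i₀ : Fin d) :
    (volume : Measure (Fin d → ℝ)) {y : Fin d → ℝ | y i₀ = 0} = 0 := by
  have h : {y : Fin d → ℝ | y i₀ = 0}
      = (LinearMap.ker (LinearMap.proj i₀ : (Fin d → ℝ) →ₗ[ℝ] ℝ) : Set (Fin d → ℝ)) := by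
    ext y; simp [LinearMap.mem_ker]
  rw [h]
  apply Measure.addHaar_submodule
  intro htop
  have h1 : (Pi.single i₀ 1 : Fin d → ℝ) ∈
      LinearMap.ker (LinearMap.proj i₀ : (Fin d → ℝ) →ₗ[ℝ] ℝ) := by
    rw [htop]; trivial
  simp [LinearMap.mem_ker] at h1



end helpers

theorem stmt10 (d : ℕ) (hd : 0 < d)
    (q₀ : (Fin d → ℝ) → ℝ) (hq₀meas : Measurable q₀)
    (hq₀nonneg : ∀ y, 0 ≤ q₀ y) (hq₀int : (∫ y, q₀ y) = 1)
    (hrot : ∀ U : Matrix (Fin d) (Fin d) ℝ, U * Uᵀ = 1 →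
      ∀ y, q₀ (U.mulVec y) = q₀ y)
    (hmom : Integrable (fun y : Fin d → ℝ => ‖y‖ ^ 2 * q₀ y))
    (S : Matrix (Fin d) (Fin d) ℝ) (hS : S.PosDef)
    (q : (Fin d → ℝ) → ℝ) (hq : ∀ x, q x = (S.det)⁻¹ * q₀ (S⁻¹.mulVec x))
    (u : Fin d → ℝ) (hu : u ≠ 0) :
    (∫ y in {y : Fin d → ℝ | 0 ≤ y ⬝ᵥ u}, q y • y)
        = ((∫ y in {y : Fin d → ℝ | 0 ≤ y ⟨0, hd⟩}, y ⟨0, hd⟩ * q₀ y) /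
            Real.sqrt ((S.mulVec u) ⬝ᵥ (S.mulVec u))) • ((S * S).mulVec u)
      ∧ 0 < ∫ y in {y : Fin d → ℝ | 0 ≤ y ⟨0, hd⟩}, y ⟨0, hd⟩ * q₀ y := by
  classical
  set i₀ : Fin d := ⟨0, hd⟩ with hi₀
  -- basic integrability
  have hq₀int' : Integrable q₀ := by
    by_contra h
    rw [integral_undef h] at hq₀int; norm_num at hq₀int
  have hbound : ∀ y : Fin d → ℝ, ‖y‖ * q₀ y ≤ q₀ y + ‖y‖ ^ 2 * q₀ y := by
    intro y
    nlinarith [hq₀nonneg y, sq_nonneg (‖y‖ - 1), norm_nonneg y]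
  have hdom : Integrable (fun y : Fin d → ℝ => q₀ y + ‖y‖ ^ 2 * q₀ y) :=
    hq₀int'.add hmom
  have hint_v : Integrable (fun y : Fin d → ℝ => q₀ y • y) := by
    refine hdom.mono' ((hq₀meas.smul measurable_id).aestronglyMeasurable) ?_
    filter_upwards with y
    rw [norm_smul, Real.norm_eq_abs, abs_of_nonneg (hq₀nonneg y), mul_comm]
    exact hbound y
  have hint_j : ∀ j : Fin d, Integrable (fun y : Fin d → ℝ => y j * q₀ y) := by
    intro j
    refine hdom.mono' (((measurable_pi_apply j).mul hq₀meas).aestronglyMeasurable) ?_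
    filter_upwards with y
    rw [Real.norm_eq_abs, abs_mul, abs_of_nonneg (hq₀nonneg y)]
    calc |y j| * q₀ y ≤ ‖y‖ * q₀ y :=
          mul_le_mul_of_nonneg_right (norm_le_pi_norm y j) (hq₀nonneg y)
      _ ≤ _ := hbound y
  have hint_abs : Integrable (fun y : Fin d → ℝ => |y i₀| * q₀ y) := by
    refine hdom.mono' (((measurable_pi_apply i₀).abs.mul hq₀meas).aestronglyMeasurable) ?_
    filter_upwards with y
    rw [Real.norm_eq_abs, abs_mul, abs_abs, abs_of_nonneg (hq₀nonneg y)]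
    calc |y i₀| * q₀ y ≤ ‖y‖ * q₀ y :=
          mul_le_mul_of_nonneg_right (norm_le_pi_norm y i₀) (hq₀nonneg y)
      _ ≤ _ := hbound y
  have hs0 : MeasurableSet {y : Fin d → ℝ | 0 ≤ y i₀} :=
    measurableSet_le measurable_const (measurable_pi_apply i₀)
  set m : ℝ := ∫ y in {y : Fin d → ℝ | 0 ≤ y i₀}, y i₀ * q₀ y with hm
  -- reflections
  have hrefl : ∀ j : Fin d, ∃ R : Matrix (Fin d) (Fin d) ℝ,
      R * Rᵀ = 1 ∧ R.det ≠ 0 ∧ |R.det| = 1 ∧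
        (∀ x : Fin d → ℝ, ∀ i, R.mulVec x i = if i = j then -x i else x i) := by
    intro j
    refine ⟨diagonal (fun i => if i = j then (-1:ℝ) else 1), ?_⟩
    set R : Matrix (Fin d) (Fin d) ℝ := diagonal (fun i => if i = j then (-1:ℝ) else 1) with hR
    have h1 : R * Rᵀ = 1 := by
      show R * Rᵀ = 1
      rw [show R = diagonal (fun i => if i = j then (-1:ℝ) else 1) from rfl,
        diagonal_transpose, diagonal_mul_diagonal, ← diagonal_one,
        show (fun i => (if i = j then (-1:ℝ) else 1) * if i = j then (-1:ℝ) else 1)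
          = fun _ => (1:ℝ) from funext fun i => by split <;> norm_num]
    have hdet : R.det = -1 := by
      show (diagonal (fun i => if i = j then (-1:ℝ) else 1)).det = -1
      rw [det_diagonal]
      rw [Finset.prod_ite_eq' Finset.univ j (fun _ => (-1:ℝ))]
      simp
    refine ⟨h1, by rw [hdet]; norm_num, by rw [hdet]; norm_num, ?_⟩
    intro x i
    show (diagonal (fun i => if i = j then (-1:ℝ) else 1)).mulVec x i = _
    rw [mulVec_diagonal]
    split <;> ring
  -- key: reflected coordinate integrals vanish
  have hK0 : (∫ y in {y : Fin d → ℝ | 0 ≤ y i₀}, q₀ y • y) = m • (Pi.single i₀ 1 : Fin d → ℝ) := by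
    have hproj : ∀ j : Fin d, (∫ y in {y : Fin d → ℝ | 0 ≤ y i₀}, q₀ y • y) j
        = ∫ y in {y : Fin d → ℝ | 0 ≤ y i₀}, q₀ y * y j := by
      intro j
      have h := (ContinuousLinearMap.proj (R := ℝ) (φ := fun _ : Fin d => ℝ)
        j).integral_comp_comm (hint_v.restrict (s := {y : Fin d → ℝ | 0 ≤ y i₀}))
      simpa [ContinuousLinearMap.proj_apply, smul_eq_mul] using h.symm
    funext j
    rw [Pi.smul_apply, hproj j]
    by_cases hj : j = i₀
    · subst hj
      rw [Pi.single_eq_same, smul_eq_mul, mul_one, hm]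
      simp only [mul_comm]
    · rw [Pi.single_eq_of_ne hj, smul_eq_mul, mul_zero]
      obtain ⟨R, h1, h2, h3, h4⟩ := hrefl j
      have hASM : AEStronglyMeasurable (fun y : Fin d → ℝ => q₀ y * y j) volume :=
        (hq₀meas.mul (measurable_pi_apply j)).aestronglyMeasurable
      have hcov := cov R h2 {y : Fin d → ℝ | 0 ≤ y i₀} hs0 (fun y => q₀ y * y j) hASM
      have hpre : R.mulVec ⁻¹' {y : Fin d → ℝ | 0 ≤ y i₀} = {y : Fin d → ℝ | 0 ≤ y i₀} := by
        ext z
        have hne : ¬ (i₀ = j) := fun h => hj h.symm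
        simp only [Set.mem_preimage, Set.mem_setOf_eq, h4 z i₀, if_neg hne]
      have heq : ∀ z : Fin d → ℝ, q₀ (R.mulVec z) * (R.mulVec z) j = -(q₀ z * z j) := by
        intro z
        rw [hrot R h1 z, h4 z j, if_pos rfl]
        ring
      rw [hpre] at hcov
      simp only [heq] at hcov
      rw [integral_neg, h3, smul_neg, one_smul] at hcov
      linarith
  -- key lemma for unit vectors
  have hK : ∀ w : Fin d → ℝ, w ⬝ᵥ w = 1 →
      (∫ z in {z : Fin d → ℝ | 0 ≤ z ⬝ᵥ w}, q₀ z • z) = m • w := by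
    intro w hw
    obtain ⟨U, hU1, hUT, hUw⟩ := householder hd w hw
    have hUU : U * U = 1 := by rwa [hUT] at hU1
    have hdetsq : U.det * U.det = 1 := by
      have h := congrArg Matrix.det hU1
      rwa [det_mul, det_transpose, det_one] at h
    have hdetne : U.det ≠ 0 := by
      intro h0; rw [h0, mul_zero] at hdetsq; norm_num at hdetsq
    have hdetabs : |U.det| = 1 := by
      have h1 : |U.det| * |U.det| = 1 := by rw [← abs_mul, hdetsq, abs_one]
      nlinarith [abs_nonneg U.det]
    have hASM : AEStronglyMeasurable (fun z : Fin d → ℝ => q₀ z • z) volume :=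
      (hq₀meas.smul measurable_id).aestronglyMeasurable
    have hcov := cov U hdetne {z : Fin d → ℝ | 0 ≤ z ⬝ᵥ w} (measurableSet_halfspace w)
      (fun z => q₀ z • z) hASM
    have hdotU : ∀ y : Fin d → ℝ, (U.mulVec y) ⬝ᵥ w = y i₀ := by
      intro y
      calc (U.mulVec y) ⬝ᵥ w = w ⬝ᵥ (U.mulVec y) := dotProduct_comm _ _
        _ = (w ᵥ* U) ⬝ᵥ y := dotProduct_mulVec _ _ _
        _ = (Uᵀ.mulVec w) ⬝ᵥ y := by rw [mulVec_transpose]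
        _ = (Pi.single i₀ 1 : Fin d → ℝ) ⬝ᵥ y := by rw [hUT, hUw]
        _ = y i₀ := by rw [single_dotProduct, one_mul]
    have hpre : U.mulVec ⁻¹' {z : Fin d → ℝ | 0 ≤ z ⬝ᵥ w} = {y : Fin d → ℝ | 0 ≤ y i₀} := by
      ext y
      simp only [Set.mem_preimage, Set.mem_setOf_eq, hdotU y]
    have hUe : U.mulVec (Pi.single i₀ 1 : Fin d → ℝ) = w := by
      calc U.mulVec (Pi.single i₀ 1 : Fin d → ℝ) = U.mulVec (U.mulVec w) := by rw [hUw]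
        _ = (U * U).mulVec w := by rw [mulVec_mulVec]
        _ = w := by rw [hUU, one_mulVec]
    have heq : ∀ y : Fin d → ℝ, q₀ (U.mulVec y) • (U.mulVec y) = mvCLM U (q₀ y • y) := by
      intro y
      rw [hrot U hU1 y, mvCLM_apply, mulVec_smul]
    rw [hcov, hpre, hdetabs]
    simp only [heq]
    rw [(mvCLM U).integral_comp_comm (hint_v.restrict), hK0, mvCLM_apply,
      mulVec_smul, hUe, one_smul]
  -- positivity
  have hmpos : 0 < m := by
    have hm_nonneg : 0 ≤ m :=
      setIntegral_nonneg hs0 (fun y hy => mul_nonneg hy (hq₀nonneg y))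
    rcases hm_nonneg.lt_or_eq with h | h
    · exact h
    exfalso
    -- h : 0 = m
    have e1 : (∫ y in {y : Fin d → ℝ | 0 ≤ y i₀}, |y i₀| * q₀ y) = m := by
      rw [hm]
      exact setIntegral_congr_fun hs0 (fun y hy => by rw [abs_of_nonneg hy])
    obtain ⟨R, h1, h2, h3, h4⟩ := hrefl i₀
    have hASM : AEStronglyMeasurable (fun y : Fin d → ℝ => |y i₀| * q₀ y) volume :=
      ((measurable_pi_apply i₀).abs.mul hq₀meas).aestronglyMeasurable
    have hcov := cov R h2 {y : Fin d → ℝ | 0 ≤ y i₀} hs0 (fun y => |y i₀| * q₀ y) hASM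
    have hpre : R.mulVec ⁻¹' {y : Fin d → ℝ | 0 ≤ y i₀} = {y : Fin d → ℝ | y i₀ ≤ 0} := by
      ext z
      simp [h4 z i₀, neg_nonneg]
    have heq : ∀ z : Fin d → ℝ, |(R.mulVec z) i₀| * q₀ (R.mulVec z) = |z i₀| * q₀ z := by
      intro z
      rw [hrot R h1 z, h4 z i₀, if_pos rfl, abs_neg]
    rw [hpre] at hcov
    simp only [heq] at hcov
    rw [h3, one_smul] at hcov
    have e2 : (∫ y in {y : Fin d → ℝ | y i₀ ≤ 0}, |y i₀| * q₀ y) = m := by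
      rw [← hcov, e1]
    have e3 : (∫ y in {y : Fin d → ℝ | 0 ≤ y i₀}ᶜ, |y i₀| * q₀ y) ≤ m := by
      rw [← e2]
      refine setIntegral_mono_set hint_abs.integrableOn ?_ ?_
      · filter_upwards with y using mul_nonneg (abs_nonneg _) (hq₀nonneg y)
      · refine HasSubset.Subset.eventuallyLE ?_
        intro y hy
        simp only [Set.mem_compl_iff, Set.mem_setOf_eq, not_le] at hy ⊢
        linarith
    have e4 : 0 ≤ ∫ y in {y : Fin d → ℝ | 0 ≤ y i₀}ᶜ, |y i₀| * q₀ y :=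
      setIntegral_nonneg hs0.compl (fun y _ => mul_nonneg (abs_nonneg _) (hq₀nonneg y))
    have hJ : (∫ y : Fin d → ℝ, |y i₀| * q₀ y) = 0 := by
      rw [← integral_add_compl hs0 hint_abs, e1]
      linarith
    have hg0 : (fun y : Fin d → ℝ => |y i₀| * q₀ y) =ᵐ[volume] 0 :=
      (integral_eq_zero_iff_of_nonneg
        (fun y => mul_nonneg (abs_nonneg _) (hq₀nonneg y)) hint_abs).mp hJ
    have hne : ∀ᵐ y : Fin d → ℝ, y i₀ ≠ 0 := by
      rw [ae_iff]
      convert hyperplane_null i₀ using 2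
      ext y
      simp
    have hq0ae : q₀ =ᵐ[volume] (0 : (Fin d → ℝ) → ℝ) := by
      filter_upwards [hg0, hne] with y hy hyne
      simp only [Pi.zero_apply] at hy ⊢
      rcases mul_eq_zero.mp hy with h' | h'
      · exact absurd (abs_eq_zero.mp h') hyne
      · exact h'
    rw [integral_congr_ae hq0ae] at hq₀int
    simp at hq₀int
  -- main computation
  refine ⟨?_, hmpos⟩
  have hdetS : 0 < S.det := hS.det_pos
  have hST : Sᵀ = S := by
    have h := hS.isHermitian.eq
    rwa [conjTranspose_eq_transpose_of_trivial] at h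
  have hSunit : IsUnit S.det := isUnit_iff_ne_zero.mpr hdetS.ne'
  have hSinv : S⁻¹ * S = 1 := nonsing_inv_mul S hSunit
  have hqmeas : Measurable q := by
    have hfun : q = fun x => (S.det)⁻¹ * q₀ (S⁻¹.mulVec x) := funext hq
    rw [hfun]
    exact measurable_const.mul (hq₀meas.comp (measurable_mulVec S⁻¹))
  have hASM : AEStronglyMeasurable (fun y : Fin d → ℝ => q y • y) volume :=
    (hqmeas.smul measurable_id).aestronglyMeasurable
  have hcov := cov S hdetS.ne' {y : Fin d → ℝ | 0 ≤ y ⬝ᵥ u} (measurableSet_halfspace u)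
    (fun y => q y • y) hASM
  have hdotS : ∀ z : Fin d → ℝ, (S.mulVec z) ⬝ᵥ u = z ⬝ᵥ (S.mulVec u) := by
    intro z
    calc (S.mulVec z) ⬝ᵥ u = u ⬝ᵥ (S.mulVec z) := dotProduct_comm _ _
      _ = (u ᵥ* S) ⬝ᵥ z := dotProduct_mulVec _ _ _
      _ = (Sᵀ.mulVec u) ⬝ᵥ z := by rw [mulVec_transpose]
      _ = (S.mulVec u) ⬝ᵥ z := by rw [hST]
      _ = z ⬝ᵥ (S.mulVec u) := dotProduct_comm _ _
  have hpre : S.mulVec ⁻¹' {y : Fin d → ℝ | 0 ≤ y ⬝ᵥ u}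
      = {z : Fin d → ℝ | 0 ≤ z ⬝ᵥ (S.mulVec u)} := by
    ext z; simp only [Set.mem_preimage, Set.mem_setOf_eq, hdotS z]
  have hintegrand : ∀ z : Fin d → ℝ, q (S.mulVec z) • (S.mulVec z)
      = (S.det)⁻¹ • (q₀ z • S.mulVec z) := by
    intro z
    rw [hq, mulVec_mulVec, hSinv, one_mulVec, mul_smul]
  rw [hcov, hpre, abs_of_pos hdetS]
  simp only [hintegrand]
  rw [integral_smul, smul_smul, mul_inv_cancel₀ hdetS.ne', one_smul]
  set v : Fin d → ℝ := S.mulVec u with hv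
  have hvne : v ≠ 0 := by
    intro h0
    apply hu
    have h1 := congrArg (S⁻¹.mulVec) h0
    rwa [mulVec_mulVec, hSinv, one_mulVec, mulVec_zero] at h1
  have hvvpos : 0 < v ⬝ᵥ v := by
    have h0 : v ⬝ᵥ v ≠ 0 := fun h' => hvne (dotProduct_self_eq_zero.mp h')
    have h1 : 0 ≤ v ⬝ᵥ v := Finset.sum_nonneg fun i _ => mul_self_nonneg _
    exact h1.lt_of_ne (Ne.symm h0)
  have hr : 0 < Real.sqrt (v ⬝ᵥ v) := Real.sqrt_pos.mpr hvvpos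
  set r : ℝ := Real.sqrt (v ⬝ᵥ v) with hrdef
  have hr2 : r * r = v ⬝ᵥ v := Real.mul_self_sqrt hvvpos.le
  have hwunit : (r⁻¹ • v) ⬝ᵥ (r⁻¹ • v) = 1 := by
    rw [smul_dotProduct, dotProduct_smul, smul_eq_mul, smul_eq_mul, ← hr2]
    field_simp
  have hsets : {z : Fin d → ℝ | 0 ≤ z ⬝ᵥ v} = {z : Fin d → ℝ | 0 ≤ z ⬝ᵥ (r⁻¹ • v)} := by
    ext z
    simp only [Set.mem_setOf_eq, dotProduct_smul, smul_eq_mul]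
    rw [mul_nonneg_iff_of_pos_left (inv_pos.mpr hr)]
  have hmv : ∀ z : Fin d → ℝ, q₀ z • S.mulVec z = mvCLM S (q₀ z • z) := by
    intro z; rw [mvCLM_apply, mulVec_smul]
  rw [hsets]
  simp only [hmv]
  rw [(mvCLM S).integral_comp_comm (hint_v.restrict), hK _ hwunit, mvCLM_apply,
    mulVec_smul, mulVec_smul, mulVec_mulVec, smul_smul, ← div_eq_mul_inv]
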